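/- Let λ > 0, Δt > 0 and set x = Δt√λ. For the P²-DG scheme with a = 0, if x⁶ - 144x⁴ + 3456x² - 20736 ≤ 0, then the two nonzero eigenvalues λ_{1,2} = (-x⁴ + 60x² - 144 ± x√(x⁶ - 144x⁴ + 3456x² - 20736))/(-2x⁴ - 12x² - 144) are complex conjugates of equal modulus, and this modulus is at most 1; equivalently |λ_{1,2}| ≤ 1 iff -4x⁸ - 24x⁶ - 288x⁴ ≤ 0, which holds for all x ≥ 0. -/

import Mathlib

open Complex

/-- the two nonzero eigenvalues of the P²-DG time-stepping matrix
(a = 0) are complex conjugates of equal modulus at most 1, with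
|λ₁,₂| ≤ 1 iff -4x⁸ - 24x⁶ - 288x⁴ ≤ 0, which holds for all x ≥ 0. -/
theorem stmt_11 (lam Δt : ℝ) (hlam : 0 < lam) (hΔt : 0 < Δt)
    (x : ℝ) (hx : x = Δt * Real.sqrt lam)
    (hdisc : x ^ 6 - 144 * x ^ 4 + 3456 * x ^ 2 - 20736 ≤ 0)
    (μ₁ μ₂ : ℂ)
    (hμ₁ : μ₁ = (((-(x ^ 4) + 60 * x ^ 2 - 144 : ℝ) : ℂ)
        + (x : ℂ) * (Complex.I *
          ((Real.sqrt (-(x ^ 6 - 144 * x ^ 4 + 3456 * x ^ 2 - 20736)) : ℝ) : ℂ)))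
        / ((-2 * x ^ 4 - 12 * x ^ 2 - 144 : ℝ) : ℂ))
    (hμ₂ : μ₂ = (((-(x ^ 4) + 60 * x ^ 2 - 144 : ℝ) : ℂ)
        - (x : ℂ) * (Complex.I *
          ((Real.sqrt (-(x ^ 6 - 144 * x ^ 4 + 3456 * x ^ 2 - 20736)) : ℝ) : ℂ)))
        / ((-2 * x ^ 4 - 12 * x ^ 2 - 144 : ℝ) : ℂ)) :
    μ₂ = (starRingEnd ℂ) μ₁ ∧
    ‖μ₂‖ = ‖μ₁‖ ∧
    ‖μ₁‖ ≤ 1 ∧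
    (‖μ₁‖ ≤ 1 ↔ -4 * x ^ 8 - 24 * x ^ 6 - 288 * x ^ 4 ≤ 0) ∧
    (∀ y : ℝ, 0 ≤ y → -4 * y ^ 8 - 24 * y ^ 6 - 288 * y ^ 4 ≤ 0) := by
  set s : ℝ := Real.sqrt (-(x ^ 6 - 144 * x ^ 4 + 3456 * x ^ 2 - 20736)) with hs
  have hs2 : s ^ 2 = -(x ^ 6 - 144 * x ^ 4 + 3456 * x ^ 2 - 20736) :=
    Real.sq_sqrt (by linarith)
  set A : ℝ := -(x ^ 4) + 60 * x ^ 2 - 144 with hA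
  set D : ℝ := -2 * x ^ 4 - 12 * x ^ 2 - 144 with hD
  have hDneg : D < 0 := by nlinarith [sq_nonneg (x ^ 2), sq_nonneg x]
  have hconj : μ₂ = (starRingEnd ℂ) μ₁ := by
    rw [hμ₁, hμ₂, map_div₀]
    simp [Complex.conj_ofReal]
    ring
  have habs : ‖μ₂‖ = ‖μ₁‖ := by
    rw [hconj, Complex.norm_conj]
  have hsq : (‖μ₁‖) ^ 2 = (A ^ 2 + x ^ 2 * s ^ 2) / D ^ 2 := by
    have h1 : μ₁ = ((A : ℂ) + ((x * s : ℝ) : ℂ) * Complex.I) / (D : ℂ) := by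
      rw [hμ₁]; push_cast; ring
    rw [h1, Complex.sq_norm, Complex.normSq_div, Complex.normSq_add_mul_I]
    simp [Complex.normSq_ofReal]
    ring
  have hkey : A ^ 2 + x ^ 2 * s ^ 2 - D ^ 2 = -4 * x ^ 8 - 24 * x ^ 6 - 288 * x ^ 4 := by
    rw [hs2, hA, hD]; ring
  have hD2 : (0:ℝ) < D ^ 2 := by nlinarith
  have hiff : ‖μ₁‖ ≤ 1 ↔ -4 * x ^ 8 - 24 * x ^ 6 - 288 * x ^ 4 ≤ 0 := by
    rw [← pow_le_one_iff_of_nonneg (norm_nonneg μ₁) two_ne_zero, hsq,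
      div_le_one hD2]
    constructor
    · intro h; linarith
    · intro h; linarith
  have hall : ∀ y : ℝ, 0 ≤ y → -4 * y ^ 8 - 24 * y ^ 6 - 288 * y ^ 4 ≤ 0 := by
    intro y _; nlinarith [sq_nonneg (y ^ 4), sq_nonneg (y ^ 3), sq_nonneg (y ^ 2)]
  have hle : ‖μ₁‖ ≤ 1 := hiff.mpr (hall x (by
    rw [hx]; positivity))
  exact ⟨hconj, habs, hle, hiff, hall⟩
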